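/- Let S and S' be self-similar Jordan zippers in ℝ^n with the same signature whose attractors γ, γ' are arcs of bounded turning, with similarity ratios p_i, q_i. Then both the agreeing homeomorphism f : γ → γ' and its inverse f^{-1} are Hölder continuous, with exponents at least α = min over i of min(log p_i / log q_i, log q_i / log p_i); i.e., the zippers are bi-Hölder isomorphic. -/

import Mathlib

open Set Metric

/-- `S i`, for `i < m`, is a contracting similarity with ratio `r i ∈ (0,1)`. -/
def IsSimilaritySystem {X : Type*} [MetricSpace X] (m : ℕ)
    (S : ℕ → X → X) (r : ℕ → ℝ) : Prop :=
  ∀ i < m, 0 < r i ∧ r i < 1 ∧ ∀ x y, dist (S i x) (S i y) = r i * dist x y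

/-- Self-similar zipper with maps `S 0, …, S (m-1)`, ratios `r`, vertices `z 0, …, z m`,
signature `ε` (values in `{0,1}`).  Here `S i` plays the role of the map `S_{i+1}` of the
paper, so the zipper conditions read `S i (z 0) = z (i + ε i)` and
`S i (z m) = z (i + 1 - ε i)`. -/
def IsZipper {X : Type*} [MetricSpace X] (m : ℕ)
    (S : ℕ → X → X) (r : ℕ → ℝ) (z : ℕ → X) (ε : ℕ → ℕ) : Prop :=
  1 ≤ m ∧ IsSimilaritySystem m S r ∧ (∀ i < m, ε i ≤ 1) ∧
    ∀ i < m, S i (z 0) = z (i + ε i) ∧ S i (z m) = z (i + 1 - ε i)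

/-- Linear zipper on `[0,1]`, with vertices `0 = t 0 < t 1 < … < t m = 1`. -/
def IsLinearZipper (m : ℕ) (T : ℕ → ℝ → ℝ) (r : ℕ → ℝ) (t : ℕ → ℝ) (ε : ℕ → ℕ) : Prop :=
  IsZipper m T r t ε ∧ t 0 = 0 ∧ t m = 1 ∧ ∀ i < m, t i < t (i + 1)

/-- `K` is the attractor of the iterated function system `{S i : i < m}`. -/
def IsAttractor {X : Type*} [MetricSpace X] (m : ℕ) (S : ℕ → X → X) (K : Set X) : Prop :=
  K.Nonempty ∧ IsCompact K ∧ K = ⋃ i ∈ Finset.range m, S i '' K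

/-- `g` is a structural parametrization of the zipper `S` (with vertices `z`)
relative to the linear zipper `T` (with vertices `t`). -/
def IsStructuralParam {X : Type*} [MetricSpace X] (m : ℕ) (S : ℕ → X → X)
    (T : ℕ → ℝ → ℝ) (t : ℕ → ℝ) (z : ℕ → X) (g : ℝ → X) : Prop :=
  ContinuousOn g (Icc 0 1) ∧ (∀ i ≤ m, g (t i) = z i) ∧
    ∀ i < m, ∀ x ∈ Icc (0:ℝ) 1, S i (g x) = g (T i x)

/-- A Jordan zipper: a zipper whose attractor `γ` is a Jordan arc, i.e. some structural
parametrization is injective on `[0,1]` (hence a homeomorphism onto `γ`). -/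
def IsJordanZipper {X : Type*} [MetricSpace X] (m : ℕ) (S : ℕ → X → X) (r : ℕ → ℝ)
    (z : ℕ → X) (ε : ℕ → ℕ) (γ : Set X) : Prop :=
  IsZipper m S r z ε ∧ IsAttractor m S γ ∧
    ∃ T rT t g, IsLinearZipper m T rT t ε ∧ IsStructuralParam m S T t z g ∧
      InjOn g (Icc 0 1) ∧ g '' Icc 0 1 = γ

/-- `g` is an injective continuous parametrization of the arc `γ` by `[0,1]`. -/
def IsArcParam {X : Type*} [MetricSpace X] (γ : Set X) (g : ℝ → X) : Prop :=
  ContinuousOn g (Icc 0 1) ∧ InjOn g (Icc 0 1) ∧ g '' Icc 0 1 = γ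

/-- Bounded turning with constant `M`: every subarc `γ_{xy}` (expressed via any
parametrization of the arc) has diameter at most `M‖x - y‖`. -/
def BoundedTurning {X : Type*} [MetricSpace X] (γ : Set X) (M : ℝ) : Prop :=
  0 < M ∧ ∀ g : ℝ → X, IsArcParam γ g →
    ∀ s ∈ Icc (0:ℝ) 1, ∀ u ∈ Icc (0:ℝ) 1, diam (g '' uIcc s u) ≤ M * dist (g s) (g u)

/-- `f` agrees with the systems `S` and `S'` on `γ`: `f ∘ S i = S' i ∘ f` on `γ`. -/
def Agrees {X Y : Type*} [MetricSpace X] [MetricSpace Y] (m : ℕ)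
    (S : ℕ → X → X) (S' : ℕ → Y → Y) (γ : Set X) (f : X → Y) : Prop :=
  ∀ i < m, ∀ x ∈ γ, f (S i x) = S' i (f x)

/-- `f` restricts to a homeomorphism of the compact set `γ` onto `γ'`. -/
def IsHomeoOnto {X Y : Type*} [MetricSpace X] [MetricSpace Y]
    (γ : Set X) (γ' : Set Y) (f : X → Y) : Prop :=
  ContinuousOn f γ ∧ InjOn f γ ∧ f '' γ = γ'

/-- Composition `S_{i₁} ∘ … ∘ S_{i_k}` along a multi-index (a list). -/
def compS {X : Type*} (S : ℕ → X → X) : List ℕ → X → X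
  | [] => id
  | i :: l => S i ∘ compS S l

/-- Product of the ratios along a multi-index. -/
def ratioProd (p : ℕ → ℝ) (l : List ℕ) : ℝ := (l.map p).prod

/-- Jordan zippers with the same signature whose attractors are of bounded
turning are bi-Hölder isomorphic, with exponent
`α = min_i min(log p_i / log q_i, log q_i / log p_i)` for both `f` and `f⁻¹`. -/

lemma seg_mono {A B a b σ : ℝ} (h : σ ∈ uIcc a b) :
    A + σ*(B-A) ∈ uIcc (A + a*(B-A)) (A + b*(B-A)) := by
  rw [mem_uIcc]
  rcases le_total (B-A) 0 with hd | hd <;>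
  rcases mem_uIcc.1 h with ⟨h1,h2⟩ | ⟨h1,h2⟩ <;>
  first
    | (left; constructor <;> nlinarith)
    | (right; constructor <;> nlinarith)

lemma seg_surj {A B s : ℝ} (hAB : A ≠ B) (hs : s ∈ uIcc A B) :
    ∃ σ ∈ Icc (0:ℝ) 1, s = A + σ * (B - A) := by
  have h0 : B - A ≠ 0 := sub_ne_zero.2 (Ne.symm hAB)
  refine ⟨(s - A)/(B - A), ?_, by field_simp; ring⟩
  rcases mem_uIcc.1 hs with ⟨h1,h2⟩ | ⟨h1,h2⟩
  · have hBA : 0 < B - A := by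
      rcases lt_or_eq_of_le (by linarith : A ≤ B) with h | h
      · linarith
      · exact absurd h hAB
    exact ⟨div_nonneg (by linarith) hBA.le, by rw [div_le_one hBA]; linarith⟩
  · have hBA : 0 < A - B := by
      rcases lt_or_eq_of_le (by linarith : B ≤ A) with h | h
      · linarith
      · exact absurd h.symm hAB
    have : (s - A)/(B - A) = (A - s)/(A - B) := by
      rw [show A - s = -(s - A) by ring, show A - B = -(B - A) by ring, neg_div_neg_eq]
    rw [this]
    exact ⟨div_nonneg (by linarith) hBA.le, by rw [div_le_one hBA]; linarith⟩

lemma abs_sub_le_of_uIcc {A B s τ : ℝ} (hs : s ∈ uIcc A B) (hτ : τ ∈ uIcc A B) :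
    |s - τ| ≤ |B - A| := by
  rcases mem_uIcc.1 hs with ⟨h1,h2⟩ | ⟨h1,h2⟩ <;>
  rcases mem_uIcc.1 hτ with ⟨h3,h4⟩ | ⟨h3,h4⟩ <;>
  · rw [abs_sub_le_iff]
    constructor <;> cases abs_cases (B - A) <;> linarith

lemma between_formula {P A B r x : ℝ} (hx : x ∈ Icc (0:ℝ) 1)
    (h1 : |P - A| = r * x) (h2 : |P - B| = r * (1 - x)) (h3 : |B - A| = r) :
    P = A + x*(B-A) := by
  obtain ⟨hx0, hx1⟩ := hx
  have hr : 0 ≤ r := by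
    have := abs_nonneg (B - A); linarith [h3]
  rcases abs_cases (P - A) with ⟨e1,_⟩ | ⟨e1,_⟩ <;>
  rcases abs_cases (P - B) with ⟨e2,_⟩ | ⟨e2,_⟩ <;>
  rcases abs_cases (B - A) with ⟨e3,_⟩ | ⟨e3,_⟩ <;>
  nlinarith [h1, h2, h3]

structure ZCore (X : Type*) (Y : Type*) [MetricSpace X] [MetricSpace Y] where
  m : ℕ
  hm : 0 < m
  T : ℕ → ℝ → ℝ
  t : ℕ → ℝ
  g : ℝ → X
  G : ℝ → Y
  p : ℕ → ℝ
  q : ℕ → ℝ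
  α : ℝ
  M : ℝ
  D' : ℝ
  pmin : ℝ
  rmax : ℝ
  hα : 0 < α
  ht0 : t 0 = 0
  htm : t m = 1
  htlt : ∀ i < m, t i < t (i+1)
  hTaff : ∀ i < m, ∀ x ∈ Icc (0:ℝ) 1, T i x = T i 0 + x * (T i 1 - T i 0)
  hTend : ∀ i < m, (T i 0 = t i ∧ T i 1 = t (i+1)) ∨ (T i 0 = t (i+1) ∧ T i 1 = t i)
  hp : ∀ i < m, 0 < p i
  hq : ∀ i < m, 0 < q i
  hqp : ∀ i < m, q i ≤ p i ^ α
  hgp : ∀ i < m, ∀ x ∈ Icc (0:ℝ) 1, ∀ y ∈ Icc (0:ℝ) 1,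
    dist (g (T i x)) (g (T i y)) = p i * dist (g x) (g y)
  hGq : ∀ i < m, ∀ x ∈ Icc (0:ℝ) 1, ∀ y ∈ Icc (0:ℝ) 1,
    dist (G (T i x)) (G (T i y)) = q i * dist (G x) (G y)
  hM : 0 < M
  hBT : ∀ s ∈ Icc (0:ℝ) 1, ∀ u ∈ Icc (0:ℝ) 1, ∀ w1 ∈ uIcc s u, ∀ w2 ∈ uIcc s u,
    dist (g w1) (g w2) ≤ M * dist (g s) (g u)
  hD' : ∀ x ∈ Icc (0:ℝ) 1, ∀ y ∈ Icc (0:ℝ) 1, dist (G x) (G y) ≤ D'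
  hD : g 0 ≠ g 1
  hpmin : 0 < pmin
  hpminle : ∀ i < m, pmin ≤ p i
  hrmax0 : 0 < rmax
  hrmax1 : rmax < 1
  hgap : ∀ i < m, t (i+1) - t i ≤ rmax

namespace ZCore
variable {X Y : Type*} [MetricSpace X] [MetricSpace Y] (c : ZCore X Y)

/-- monotonicity of vertices -/
lemma t_mono : ∀ {j k : ℕ}, j ≤ k → k ≤ c.m → c.t j ≤ c.t k := by
  intro j k hjk hkm
  induction k with
  | zero => simp_all
  | succ k ih =>
    rcases Nat.lt_or_ge j (k+1) with h | h
    · have h1 : c.t j ≤ c.t k := ih (Nat.lt_succ_iff.1 h) (by omega)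
      have h2 : c.t k < c.t (k+1) := c.htlt k (by omega)
      linarith
    · have : j = k + 1 := le_antisymm hjk h
      simp [this]

lemma t_mem {j : ℕ} (hj : j ≤ c.m) : c.t j ∈ Icc (0:ℝ) 1 := by
  constructor
  · have := c.t_mono (Nat.zero_le j) hj; rw [c.ht0] at this; linarith
  · have := c.t_mono hj le_rfl; rw [c.htm] at this; linarith

lemma T_mem_end {i : ℕ} (hi : i < c.m) : T c i 0 ∈ Icc (0:ℝ) 1 ∧ T c i 1 ∈ Icc (0:ℝ) 1 := by
  rcases c.hTend i hi with ⟨h1, h2⟩ | ⟨h1, h2⟩ <;>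
    exact ⟨by rw [h1]; exact c.t_mem (by omega), by rw [h2]; exact c.t_mem (by omega)⟩

lemma T_gap {i : ℕ} (hi : i < c.m) : |T c i 1 - T c i 0| = c.t (i+1) - c.t i := by
  have := c.htlt i hi
  rcases c.hTend i hi with ⟨h1, h2⟩ | ⟨h1, h2⟩ <;> rw [h1, h2] <;>
    [skip; rw [abs_sub_comm]] <;> rw [abs_of_nonneg (by linarith)]

lemma T_mem {i : ℕ} (hi : i < c.m) {x : ℝ} (hx : x ∈ Icc (0:ℝ) 1) :
    T c i x ∈ Icc (0:ℝ) 1 := by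
  rw [c.hTaff i hi x hx]
  have h0 := (c.T_mem_end hi).1
  have h1 := (c.T_mem_end hi).2
  have hxm : x ∈ uIcc (0:ℝ) 1 := by rwa [uIcc_of_le zero_le_one]
  have h' := seg_mono (A := c.T i 0) (B := c.T i 1) hxm
  rw [show c.T i 0 + 0*(c.T i 1 - c.T i 0) = c.T i 0 by ring,
    show c.T i 0 + 1*(c.T i 1 - c.T i 0) = c.T i 1 by ring] at h'
  have hsub : uIcc (c.T i 0) (c.T i 1) ⊆ Icc (0:ℝ) 1 := by
    rw [show Icc (0:ℝ) 1 = uIcc 0 1 from (uIcc_of_le zero_le_one).symm]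
    exact uIcc_subset_uIcc (by rwa [uIcc_of_le zero_le_one]) (by rwa [uIcc_of_le zero_le_one])
  exact hsub h'

/-- the good-cylinder predicate -/
def Good (A B P Q : ℝ) : Prop :=
  uIcc A B ⊆ Icc (0:ℝ) 1 ∧ 0 < P ∧ 0 < Q ∧ Q ≤ P ^ c.α ∧
  (∀ x ∈ Icc (0:ℝ) 1, ∀ y ∈ Icc (0:ℝ) 1,
    dist (c.g (A + x*(B-A))) (c.g (A + y*(B-A))) = P * dist (c.g x) (c.g y)) ∧
  (∀ x ∈ Icc (0:ℝ) 1, ∀ y ∈ Icc (0:ℝ) 1,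
    dist (c.G (A + x*(B-A))) (c.G (A + y*(B-A))) = Q * dist (c.G x) (c.G y))

lemma good_unit : c.Good 0 1 1 1 := by
  refine ⟨by rw [uIcc_of_le zero_le_one], one_pos, one_pos, by rw [Real.one_rpow], ?_, ?_⟩ <;>
  · intro x _ y _
    norm_num

lemma good_child {A B P Q : ℝ} (h : c.Good A B P Q) {i : ℕ} (hi : i < c.m) :
    c.Good (A + (c.T i 0)*(B-A)) (A + (c.T i 1)*(B-A)) (P * c.p i) (Q * c.q i) := by
  obtain ⟨hsub, hP, hQ, hQP, hg, hG⟩ := h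
  have e0 := (c.T_mem_end hi).1
  have e1 := (c.T_mem_end hi).2
  have hpi := c.hp i hi
  have hqi := c.hq i hi
  have key : ∀ x ∈ Icc (0:ℝ) 1,
      (A + (c.T i 0)*(B-A)) + x * ((A + (c.T i 1)*(B-A)) - (A + (c.T i 0)*(B-A)))
        = A + (c.T i x)*(B-A) := by
    intro x hx
    rw [c.hTaff i hi x hx]; ring
  refine ⟨?_, by positivity, by positivity, ?_, ?_, ?_⟩
  · have m0 : A + (c.T i 0)*(B-A) ∈ uIcc A B := by
      have := seg_mono (A := A) (B := B) (a := 0) (b := 1)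
        (by rw [uIcc_of_le zero_le_one]; exact e0)
      simpa using this
    have m1 : A + (c.T i 1)*(B-A) ∈ uIcc A B := by
      have := seg_mono (A := A) (B := B) (a := 0) (b := 1)
        (by rw [uIcc_of_le zero_le_one]; exact e1)
      simpa using this
    exact fun x hx => hsub (uIcc_subset_uIcc m0 m1 hx)
  · calc Q * c.q i ≤ P ^ c.α * (c.p i) ^ c.α :=
          mul_le_mul hQP (c.hqp i hi) (c.hq i hi).le (by positivity)
      _ = (P * c.p i) ^ c.α := (Real.mul_rpow hP.le (c.hp i hi).le).symm
  · intro x hx y hy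
    rw [key x hx, key y hy, hg _ (c.T_mem hi hx) _ (c.T_mem hi hy), c.hgp i hi x hx y hy]
    ring
  · intro x hx y hy
    rw [key x hx, key y hy, hG _ (c.T_mem hi hx) _ (c.T_mem hi hy), c.hGq i hi x hx y hy]
    ring

end ZCore

namespace ZCore
variable {X Y : Type*} [MetricSpace X] [MetricSpace Y] (c : ZCore X Y)

lemma mem01 : (0:ℝ) ∈ Icc (0:ℝ) 1 := ⟨le_rfl, zero_le_one⟩
lemma mem11 : (1:ℝ) ∈ Icc (0:ℝ) 1 := ⟨zero_le_one, le_rfl⟩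

/-- conclusion of the one-sided descent -/
def DescConcl (A B σ τb : ℝ) : Prop :=
  ∃ P' Q', 0 < P' ∧ Q' ≤ P' ^ c.α ∧
    dist (c.G (A + σ*(B-A))) (c.G (A + τb*(B-A))) ≤ Q' * c.D' ∧
    ∃ w1 w2, w1 ∈ uIcc (A + σ*(B-A)) (A + τb*(B-A)) ∧
      w2 ∈ uIcc (A + σ*(B-A)) (A + τb*(B-A)) ∧
      c.pmin * P' * dist (c.g 0) (c.g 1) ≤ dist (c.g w1) (c.g w2)

lemma T_ne {j : ℕ} (hj : j < c.m) : c.T j 0 ≠ c.T j 1 := by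
  have h1 := c.T_gap hj
  have h2 := c.htlt j hj
  intro h
  rw [← h] at h1
  simp at h1
  linarith

/-- stop case of the descent -/
lemma desc_stop {A B P Q σ τb : ℝ} (hGood : c.Good A B P Q) {j : ℕ} (hj : j < c.m)
    (hσ : σ ∈ Icc (0:ℝ) 1) (hτ : τb ∈ Icc (0:ℝ) 1)
    (h0m : c.T j 0 ∈ uIcc σ τb) (h1m : c.T j 1 ∈ uIcc σ τb) :
    c.DescConcl A B σ τb := by
  obtain ⟨hsub, hP, hQ, hQP, hg, hG⟩ := hGood
  refine ⟨P, Q, hP, hQP, ?_, ?_⟩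
  · rw [hG σ hσ τb hτ]
    exact mul_le_mul_of_nonneg_left (c.hD' σ hσ τb hτ) hQ.le
  · refine ⟨A + (c.T j 0)*(B-A), A + (c.T j 1)*(B-A),
      seg_mono h0m, seg_mono h1m, ?_⟩
    rw [hg _ (c.T_mem_end hj).1 _ (c.T_mem_end hj).2,
      c.hgp j hj 0 mem01 1 mem11]
    have h1 := c.hpminle j hj
    have h3 : c.pmin * P ≤ c.p j * P := mul_le_mul_of_nonneg_right h1 hP.le
    calc c.pmin * P * dist (c.g 0) (c.g 1) ≤ c.p j * P * dist (c.g 0) (c.g 1) :=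
          mul_le_mul_of_nonneg_right h3 dist_nonneg
      _ = P * (c.p j * dist (c.g 0) (c.g 1)) := by ring

/-- recursion case of the descent -/
lemma desc_rec {k : ℕ}
    (ih : ∀ A B P Q, c.Good A B P Q → ∀ σ τb, σ ∈ Icc (0:ℝ) 1 → (τb = 0 ∨ τb = 1) →
      c.rmax ^ k < |σ - τb| → c.DescConcl A B σ τb)
    {A B P Q σ τb : ℝ} (hGood : c.Good A B P Q) {j : ℕ} (hj : j < c.m)
    (hσm : σ ∈ uIcc (c.T j 0) (c.T j 1)) {τb' : ℝ} (hτb' : τb' = 0 ∨ τb' = 1)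
    (hτeq : τb = c.T j 0 + τb' * (c.T j 1 - c.T j 0))
    (hk : c.rmax ^ (k+1) < |σ - τb|) :
    c.DescConcl A B σ τb := by
  obtain ⟨σ', hσ', hσeq⟩ := seg_surj (c.T_ne hj) hσm
  have habs : |σ - τb| = |σ' - τb'| * |c.T j 1 - c.T j 0| := by
    rw [hσeq, hτeq, show c.T j 0 + σ' * (c.T j 1 - c.T j 0) -
      (c.T j 0 + τb' * (c.T j 1 - c.T j 0)) = (σ' - τb') * (c.T j 1 - c.T j 0) by ring,
      abs_mul]
  have hk' : c.rmax ^ k < |σ' - τb'| := by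
    have h1 : |c.T j 1 - c.T j 0| ≤ c.rmax := by
      rw [c.T_gap hj]; exact c.hgap j hj
    have h2 : c.rmax ^ k * c.rmax < |σ' - τb'| * c.rmax := by
      calc c.rmax ^ k * c.rmax = c.rmax ^ (k+1) := by ring
        _ < |σ - τb| := hk
        _ = |σ' - τb'| * |c.T j 1 - c.T j 0| := habs
        _ ≤ |σ' - τb'| * c.rmax := by
            exact mul_le_mul_of_nonneg_left h1 (abs_nonneg _)
    exact lt_of_mul_lt_mul_right h2 c.hrmax0.le
  obtain ⟨P', Q', h1, h2, h3, w1, w2, m1, m2, h4⟩ :=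
    ih _ _ _ _ (c.good_child hGood hj) σ' τb' hσ' hτb' hk'
  have eσ : (A + (c.T j 0)*(B-A)) + σ' * ((A + (c.T j 1)*(B-A)) - (A + (c.T j 0)*(B-A)))
      = A + σ*(B-A) := by rw [hσeq]; ring
  have eτ : (A + (c.T j 0)*(B-A)) + τb' * ((A + (c.T j 1)*(B-A)) - (A + (c.T j 0)*(B-A)))
      = A + τb*(B-A) := by rw [hτeq]; ring
  rw [eσ, eτ] at h3 m1 m2
  exact ⟨P', Q', h1, h2, h3, w1, w2, m1, m2, h4⟩

end ZCore

namespace ZCore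
variable {X Y : Type*} [MetricSpace X] [MetricSpace Y] (c : ZCore X Y)

lemma descent : ∀ (k : ℕ) (A B P Q : ℝ), c.Good A B P Q →
    ∀ (σ τb : ℝ), σ ∈ Icc (0:ℝ) 1 → (τb = 0 ∨ τb = 1) →
    c.rmax ^ k < |σ - τb| → c.DescConcl A B σ τb := by
  intro k
  induction k with
  | zero =>
    intro A B P Q hGood σ τb hσ hτb hk
    exfalso
    have hτm : τb ∈ Icc (0:ℝ) 1 := by
      rcases hτb with h | h <;> subst h
      · exact mem01
      · exact mem11
    have h1 : |σ - τb| ≤ |(1:ℝ) - 0| := abs_sub_le_of_uIcc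
      (by rwa [uIcc_of_le zero_le_one]) (by rwa [uIcc_of_le zero_le_one])
    simp only [pow_zero] at hk
    norm_num at h1
    linarith
  | succ k ih =>
    intro A B P Q hGood σ τb hσ hτb hk
    rcases hτb with rfl | rfl
    · -- anchor at the left endpoint 0 = t 0; extreme child is child 0
      have hj : 0 < c.m := c.hm
      have ht1 : c.t 0 < c.t 1 := c.htlt 0 hj
      have ht00 : c.t 0 = 0 := c.ht0
      by_cases hcase : σ ≤ c.t 1
      · -- recurse into child 0
        have hσm : σ ∈ uIcc (c.T 0 0) (c.T 0 1) := by
          have : σ ∈ uIcc (c.t 0) (c.t 1) := by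
            rw [uIcc_of_le ht1.le]
            exact ⟨by rw [ht00]; exact hσ.1, hcase⟩
          rcases c.hTend 0 hj with ⟨h1, h2⟩ | ⟨h1, h2⟩ <;> rw [h1, h2]
          · exact this
          · rwa [uIcc_comm]
        rcases c.hTend 0 hj with ⟨h1, h2⟩ | ⟨h1, h2⟩
        · exact c.desc_rec ih hGood hj hσm (Or.inl rfl)
            (by rw [h1, ht00]; ring) hk
        · exact c.desc_rec ih hGood hj hσm (Or.inr rfl)
            (by rw [h2, ht00]; ring) hk
      · -- stop
        push_neg at hcase
        have hsm : c.t 0 ∈ uIcc σ 0 ∧ c.t 1 ∈ uIcc σ 0 := by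
          rw [uIcc_comm, uIcc_of_le hσ.1]
          exact ⟨⟨by rw [ht00], by rw [ht00]; exact hσ.1⟩, ⟨by linarith [hσ.1, ht00], hcase.le⟩⟩
        rcases c.hTend 0 hj with ⟨h1, h2⟩ | ⟨h1, h2⟩ <;>
          exact c.desc_stop hGood hj hσ mem01
            (by rw [h1]; first | exact hsm.1 | exact hsm.2)
            (by rw [h2]; first | exact hsm.1 | exact hsm.2)
    · -- anchor at the right endpoint 1 = t m; extreme child is child m-1
      have hj : c.m - 1 < c.m := Nat.sub_lt c.hm one_pos
      have hj1 : c.m - 1 + 1 = c.m := Nat.succ_pred_eq_of_pos c.hm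
      have ht1 : c.t (c.m - 1) < c.t (c.m - 1 + 1) := c.htlt _ hj
      have htm1 : c.t (c.m - 1 + 1) = 1 := by rw [hj1, c.htm]
      by_cases hcase : c.t (c.m - 1) ≤ σ
      · -- recurse into child m-1
        have hσm : σ ∈ uIcc (c.T (c.m - 1) 0) (c.T (c.m - 1) 1) := by
          have : σ ∈ uIcc (c.t (c.m - 1)) (c.t (c.m - 1 + 1)) := by
            rw [uIcc_of_le ht1.le]
            exact ⟨hcase, by rw [htm1]; exact hσ.2⟩
          rcases c.hTend _ hj with ⟨h1, h2⟩ | ⟨h1, h2⟩ <;> rw [h1, h2]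
          · exact this
          · rwa [uIcc_comm]
        rcases c.hTend _ hj with ⟨h1, h2⟩ | ⟨h1, h2⟩
        · exact c.desc_rec ih hGood hj hσm (Or.inr rfl)
            (by rw [h1, h2, htm1]; ring) hk
        · exact c.desc_rec ih hGood hj hσm (Or.inl rfl)
            (by rw [h1, htm1]; ring) hk
      · -- stop
        push_neg at hcase
        have hsm : c.t (c.m - 1) ∈ uIcc σ 1 ∧ c.t (c.m - 1 + 1) ∈ uIcc σ 1 := by
          rw [uIcc_of_le hσ.2]
          have hub : c.t (c.m - 1) ≤ 1 := (c.t_mem (Nat.sub_le c.m 1)).2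
          exact ⟨⟨hcase.le, hub⟩, ⟨by rw [htm1]; exact hσ.2, le_of_eq htm1⟩⟩
        rcases c.hTend _ hj with ⟨h1, h2⟩ | ⟨h1, h2⟩ <;>
          exact c.desc_stop hGood hj hσ mem11
            (by rw [h1]; first | exact hsm.1 | exact hsm.2)
            (by rw [h2]; first | exact hsm.1 | exact hsm.2)

end ZCore

namespace ZCore
variable {X Y : Type*} [MetricSpace X] [MetricSpace Y] (c : ZCore X Y)

lemma hD'0 : 0 ≤ c.D' := le_trans dist_nonneg (c.hD' 0 mem01 0 mem01)

lemma hDpos : 0 < dist (c.g 0) (c.g 1) := dist_pos.2 c.hD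

/-- the one-sided Hölder constant -/
noncomputable def E1 : ℝ :=
  c.D' * (c.M * c.M / (c.pmin * dist (c.g 0) (c.g 1))) ^ c.α

/-- the middle-piece Hölder constant -/
noncomputable def E2 : ℝ :=
  c.D' * (c.M / (c.pmin * dist (c.g 0) (c.g 1))) ^ c.α

lemma E1_nonneg : 0 ≤ c.E1 :=
  mul_nonneg c.hD'0 (Real.rpow_nonneg
    (div_nonneg (mul_nonneg c.hM.le c.hM.le) (mul_nonneg c.hpmin.le dist_nonneg)) _)

lemma E2_nonneg : 0 ≤ c.E2 :=
  mul_nonneg c.hD'0 (Real.rpow_nonneg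
    (div_nonneg c.hM.le (mul_nonneg c.hpmin.le dist_nonneg)) _)

lemma rpow_push {P d c0 : ℝ} (hP : 0 < P) (hc0 : 0 < c0) (hd : 0 ≤ d) (h : P ≤ c0 * d) :
    P ^ c.α * c.D' ≤ (c.D' * c0 ^ c.α) * d ^ c.α := by
  have h1 : P ^ c.α ≤ (c0 * d) ^ c.α := Real.rpow_le_rpow hP.le h c.hα.le
  rw [Real.mul_rpow hc0.le hd] at h1
  calc P ^ c.α * c.D' ≤ (c0 ^ c.α * d ^ c.α) * c.D' :=
        mul_le_mul_of_nonneg_right h1 c.hD'0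
    _ = (c.D' * c0 ^ c.α) * d ^ c.α := by ring

lemma P_from_BT {P d cM : ℝ} (hcM : 0 < cM)
    (h : c.pmin * P * dist (c.g 0) (c.g 1) ≤ cM * d) :
    P ≤ (cM / (c.pmin * dist (c.g 0) (c.g 1))) * d := by
  have hpD : 0 < c.pmin * dist (c.g 0) (c.g 1) := mul_pos c.hpmin c.hDpos
  rw [div_mul_eq_mul_div, le_div_iff₀ hpD]
  nlinarith

end ZCore

lemma e_mem_unit {A B σ : ℝ} (hsub : uIcc A B ⊆ Icc (0:ℝ) 1) (hσ : σ ∈ Icc (0:ℝ) 1) :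
    A + σ*(B-A) ∈ Icc (0:ℝ) 1 := by
  apply hsub
  have h := seg_mono (A := A) (B := B) (a := 0) (b := 1)
    (by rwa [uIcc_of_le zero_le_one])
  rwa [show A + 0*(B-A) = A by ring, show A + 1*(B-A) = B by ring] at h

namespace ZCore
variable {X Y : Type*} [MetricSpace X] [MetricSpace Y] (c : ZCore X Y)

lemma mem_child_uIcc {ι : ℕ} (hι : ι < c.m) {σ : ℝ}
    (hσI : σ ∈ Icc (c.t ι) (c.t (ι+1))) : σ ∈ uIcc (c.T ι 0) (c.T ι 1) := by
  have hlt := c.htlt ι hι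
  rcases c.hTend ι hι with ⟨h1, h2⟩ | ⟨h1, h2⟩ <;> rw [h1, h2]
  · rwa [uIcc_of_le hlt.le]
  · rwa [uIcc_comm, uIcc_of_le hlt.le]

lemma anchor_param {ι : ℕ} (hι : ι < c.m) {v : ℝ}
    (hv : v = c.t ι ∨ v = c.t (ι+1)) :
    ∃ v', (v' = 0 ∨ v' = 1) ∧ v = c.T ι 0 + v' * (c.T ι 1 - c.T ι 0) := by
  rcases c.hTend ι hι with ⟨h1, h2⟩ | ⟨h1, h2⟩ <;> rcases hv with rfl | rfl
  · exact ⟨0, Or.inl rfl, by rw [h1]; ring⟩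
  · exact ⟨1, Or.inr rfl, by rw [h2]; ring⟩
  · exact ⟨1, Or.inr rfl, by rw [h2]; ring⟩
  · exact ⟨0, Or.inl rfl, by rw [h1]; ring⟩

/-- one-sided estimate: the `G`-distance from `e σ` to the anchored vertex `e v`
is Hölder-bounded by the `g`-distance from `e σ` to `e υ`. -/
lemma side_bound {A B P Q : ℝ} (hGood : c.Good A B P Q) {ι : ℕ} (hι : ι < c.m)
    {σ υ v : ℝ} (hσI : σ ∈ Icc (c.t ι) (c.t (ι+1))) (hσ : σ ∈ Icc (0:ℝ) 1)
    (hυ : υ ∈ Icc (0:ℝ) 1) (hv : v = c.t ι ∨ v = c.t (ι+1)) (hvin : v ∈ uIcc σ υ) :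
    dist (c.G (A + σ*(B-A))) (c.G (A + v*(B-A)))
      ≤ c.E1 * dist (c.g (A + σ*(B-A))) (c.g (A + υ*(B-A))) ^ c.α := by
  have hsub := hGood.1
  have hdnn : (0:ℝ) ≤ dist (c.g (A + σ*(B-A))) (c.g (A + υ*(B-A))) := dist_nonneg
  by_cases hσv : σ = v
  · exact le_trans (le_of_eq (by rw [hσv, dist_self]))
      (mul_nonneg c.E1_nonneg (Real.rpow_nonneg hdnn _))
  -- pull back into child ι
  have hσm : σ ∈ uIcc (c.T ι 0) (c.T ι 1) := c.mem_child_uIcc hι hσI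
  obtain ⟨σ'', hσ''I, hσeq⟩ := seg_surj (c.T_ne hι) hσm
  obtain ⟨v', hv', hveq⟩ := c.anchor_param hι hv
  have hne : σ'' ≠ v' := by
    intro h; apply hσv; rw [hσeq, hveq, h]
  obtain ⟨k, hk⟩ := exists_pow_lt_of_lt_one (abs_pos.2 (sub_ne_zero.2 hne)) c.hrmax1
  obtain ⟨P', Q', hP', hQ'P', h3, w1, w2, m1, m2, h4⟩ :=
    c.descent k _ _ _ _ (c.good_child hGood hι) σ'' v' hσ''I hv' hk
  have eσ : (A + (c.T ι 0)*(B-A)) + σ'' * ((A + (c.T ι 1)*(B-A)) - (A + (c.T ι 0)*(B-A)))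
      = A + σ*(B-A) := by rw [hσeq]; ring
  have ev : (A + (c.T ι 0)*(B-A)) + v' * ((A + (c.T ι 1)*(B-A)) - (A + (c.T ι 0)*(B-A)))
      = A + v*(B-A) := by rw [hveq]; ring
  rw [eσ, ev] at h3 m1 m2
  -- membership of the relevant points in [0,1]
  have hs01 : A + σ*(B-A) ∈ Icc (0:ℝ) 1 := e_mem_unit hsub hσ
  have hv01e : v ∈ Icc (0:ℝ) 1 := by
    rcases hv with rfl | rfl
    · exact c.t_mem (by omega)
    · exact c.t_mem (by omega)
  have hτ01 : A + v*(B-A) ∈ Icc (0:ℝ) 1 := e_mem_unit hsub hv01e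
  have hu01 : A + υ*(B-A) ∈ Icc (0:ℝ) 1 := e_mem_unit hsub hυ
  -- bounded turning gives a bound on P'
  have hBT1 : dist (c.g w1) (c.g w2)
      ≤ c.M * dist (c.g (A + σ*(B-A))) (c.g (A + v*(B-A))) :=
    c.hBT _ hs01 _ hτ01 _ m1 _ m2
  have hτinuv : A + v*(B-A) ∈ uIcc (A + σ*(B-A)) (A + υ*(B-A)) := seg_mono hvin
  have hBT2 : dist (c.g (A + σ*(B-A))) (c.g (A + v*(B-A)))
      ≤ c.M * dist (c.g (A + σ*(B-A))) (c.g (A + υ*(B-A))) :=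
    c.hBT _ hs01 _ hu01 _ left_mem_uIcc _ hτinuv
  have hP'le : P' ≤ (c.M * c.M / (c.pmin * dist (c.g 0) (c.g 1)))
      * dist (c.g (A + σ*(B-A))) (c.g (A + υ*(B-A))) := by
    apply c.P_from_BT (mul_pos c.hM c.hM)
    calc c.pmin * P' * dist (c.g 0) (c.g 1) ≤ dist (c.g w1) (c.g w2) := h4
      _ ≤ c.M * dist (c.g (A + σ*(B-A))) (c.g (A + v*(B-A))) := hBT1
      _ ≤ c.M * (c.M * dist (c.g (A + σ*(B-A))) (c.g (A + υ*(B-A)))) :=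
          mul_le_mul_of_nonneg_left hBT2 c.hM.le
      _ = c.M * c.M * dist (c.g (A + σ*(B-A))) (c.g (A + υ*(B-A))) := by ring
  calc dist (c.G (A + σ*(B-A))) (c.G (A + v*(B-A))) ≤ Q' * c.D' := h3
    _ ≤ P' ^ c.α * c.D' := mul_le_mul_of_nonneg_right hQ'P' c.hD'0
    _ ≤ c.E1 * dist (c.g (A + σ*(B-A))) (c.g (A + υ*(B-A))) ^ c.α :=
        c.rpow_push hP' (div_pos (mul_pos c.hM c.hM) (mul_pos c.hpmin c.hDpos)) hdnn hP'le

end ZCore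

namespace ZCore
variable {X Y : Type*} [MetricSpace X] [MetricSpace Y] (c : ZCore X Y)

open Classical in
lemma main_ind : ∀ (k : ℕ) (A B P Q : ℝ), c.Good A B P Q →
    ∀ (σ υ : ℝ), σ ∈ Icc (0:ℝ) 1 → υ ∈ Icc (0:ℝ) 1 → c.rmax ^ k < |σ - υ| →
    dist (c.G (A + σ*(B-A))) (c.G (A + υ*(B-A)))
      ≤ (2*c.E1 + c.E2) * dist (c.g (A + σ*(B-A))) (c.g (A + υ*(B-A))) ^ c.α := by
  intro k
  induction k with
  | zero =>
    intro A B P Q hGood σ υ hσ hυ hk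
    exfalso
    have h1 : |σ - υ| ≤ |(1:ℝ) - 0| := abs_sub_le_of_uIcc
      (by rwa [uIcc_of_le zero_le_one]) (by rwa [uIcc_of_le zero_le_one])
    simp only [pow_zero] at hk
    norm_num at h1
    linarith
  | succ k ih =>
    have claim : ∀ (A B P Q : ℝ), c.Good A B P Q →
        ∀ (σ υ : ℝ), σ ∈ Icc (0:ℝ) 1 → υ ∈ Icc (0:ℝ) 1 → σ ≤ υ →
        c.rmax ^ (k+1) < |σ - υ| →
        dist (c.G (A + σ*(B-A))) (c.G (A + υ*(B-A)))
          ≤ (2*c.E1 + c.E2) * dist (c.g (A + σ*(B-A))) (c.g (A + υ*(B-A))) ^ c.α := by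
      intro A B P Q hGood σ υ hσ hυ hσυ hk
      have hsub := hGood.1
      have hσυ' : σ < υ := by
        rcases lt_or_eq_of_le hσυ with h | h
        · exact h
        · exfalso; rw [h] at hk; simp at hk
          exact absurd hk (not_lt.2 (pow_nonneg c.hrmax0.le _))
      have hdnn : (0:ℝ) ≤ dist (c.g (A + σ*(B-A))) (c.g (A + υ*(B-A))) := dist_nonneg
      have hrnn : (0:ℝ) ≤ dist (c.g (A + σ*(B-A))) (c.g (A + υ*(B-A))) ^ c.α :=
        Real.rpow_nonneg hdnn _
      -- locate σ and υ in the level-one partition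
      set ι := Nat.findGreatest (fun j => c.t j ≤ σ) (c.m - 1) with hιdef
      set κ := Nat.findGreatest (fun j => c.t j ≤ υ) (c.m - 1) with hκdef
      have hm1 := c.hm
      have hιle : ι ≤ c.m - 1 := Nat.findGreatest_le _
      have hκle : κ ≤ c.m - 1 := Nat.findGreatest_le _
      have hιm : ι < c.m := by omega
      have hκm : κ < c.m := by omega
      have htισ : c.t ι ≤ σ :=
        Nat.findGreatest_spec (P := fun j => c.t j ≤ σ) (Nat.zero_le _) (by show c.t 0 ≤ σ; rw [c.ht0]; exact hσ.1)
      have htκυ : c.t κ ≤ υ :=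
        Nat.findGreatest_spec (P := fun j => c.t j ≤ υ) (Nat.zero_le _) (by show c.t 0 ≤ υ; rw [c.ht0]; exact hυ.1)
      have hσtι : σ ≤ c.t (ι+1) := by
        by_cases h : ι + 1 ≤ c.m - 1
        · have := Nat.findGreatest_is_greatest (P := fun j => c.t j ≤ σ)
            (k := ι+1) (by omega) h
          exact (not_le.mp this).le
        · have : ι + 1 = c.m := by omega
          rw [this, c.htm]; exact hσ.2
      have hυtκ : υ ≤ c.t (κ+1) := by
        by_cases h : κ + 1 ≤ c.m - 1
        · have := Nat.findGreatest_is_greatest (P := fun j => c.t j ≤ υ)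
            (k := κ+1) (by omega) h
          exact (not_le.mp this).le
        · have : κ + 1 = c.m := by omega
          rw [this, c.htm]; exact hυ.2
      have hικ : ι ≤ κ := Nat.le_findGreatest hιle (le_trans htισ hσυ)
      rcases Nat.lt_or_ge κ (ι+1) with hcase | hcase
      · -- κ = ι : recurse into the common child
        have hκι : κ = ι := by omega
        rw [hκι] at htκυ hυtκ
        have hσm : σ ∈ uIcc (c.T ι 0) (c.T ι 1) :=
          c.mem_child_uIcc hιm ⟨htισ, hσtι⟩
        have hυm : υ ∈ uIcc (c.T ι 0) (c.T ι 1) :=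
          c.mem_child_uIcc hιm ⟨htκυ, hυtκ⟩
        obtain ⟨σ', hσ', hσeq⟩ := seg_surj (c.T_ne hιm) hσm
        obtain ⟨υ', hυ', hυeq⟩ := seg_surj (c.T_ne hιm) hυm
        have habs : |σ - υ| = |σ' - υ'| * |c.T ι 1 - c.T ι 0| := by
          rw [hσeq, hυeq, show c.T ι 0 + σ' * (c.T ι 1 - c.T ι 0) -
            (c.T ι 0 + υ' * (c.T ι 1 - c.T ι 0)) = (σ' - υ') * (c.T ι 1 - c.T ι 0) by ring,
            abs_mul]
        have hk' : c.rmax ^ k < |σ' - υ'| := by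
          have h1 : |c.T ι 1 - c.T ι 0| ≤ c.rmax := by
            rw [c.T_gap hιm]; exact c.hgap ι hιm
          have h2 : c.rmax ^ k * c.rmax < |σ' - υ'| * c.rmax := by
            calc c.rmax ^ k * c.rmax = c.rmax ^ (k+1) := by ring
              _ < |σ - υ| := hk
              _ = |σ' - υ'| * |c.T ι 1 - c.T ι 0| := habs
              _ ≤ |σ' - υ'| * c.rmax := mul_le_mul_of_nonneg_left h1 (abs_nonneg _)
          exact lt_of_mul_lt_mul_right h2 c.hrmax0.le
        have h := ih _ _ _ _ (c.good_child hGood hιm) σ' υ' hσ' hυ' hk'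
        have eσ : (A + (c.T ι 0)*(B-A)) + σ' * ((A + (c.T ι 1)*(B-A)) - (A + (c.T ι 0)*(B-A)))
            = A + σ*(B-A) := by rw [hσeq]; ring
        have eυ : (A + (c.T ι 0)*(B-A)) + υ' * ((A + (c.T ι 1)*(B-A)) - (A + (c.T ι 0)*(B-A)))
            = A + υ*(B-A) := by rw [hυeq]; ring
        rwa [eσ, eυ] at h
      rcases Nat.lt_or_ge κ (ι+2) with hcase2 | hcase2
      · -- κ = ι + 1 : split at the common vertex t (ι+1) = t κ
        have hκι : κ = ι + 1 := by omega
        have hvin : c.t (ι+1) ∈ uIcc σ υ := by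
          rw [uIcc_of_le hσυ]
          exact ⟨hσtι, by rw [← hκι]; exact htκυ⟩
        have side1 := c.side_bound hGood hιm ⟨htισ, hσtι⟩ hσ hυ
          (Or.inr rfl) hvin
        have hvin2 : c.t κ ∈ uIcc υ σ := by
          rw [hκι, uIcc_comm]; exact hvin
        have side2 := c.side_bound hGood hκm ⟨htκυ, hυtκ⟩ hυ hσ
          (Or.inl rfl) hvin2
        rw [hκι] at side2
        calc dist (c.G (A + σ*(B-A))) (c.G (A + υ*(B-A)))
            ≤ dist (c.G (A + σ*(B-A))) (c.G (A + (c.t (ι+1))*(B-A)))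
              + dist (c.G (A + (c.t (ι+1))*(B-A))) (c.G (A + υ*(B-A))) := dist_triangle _ _ _
          _ = dist (c.G (A + σ*(B-A))) (c.G (A + (c.t (ι+1))*(B-A)))
              + dist (c.G (A + υ*(B-A))) (c.G (A + (c.t (ι+1))*(B-A))) := by rw [dist_comm (c.G (A + (c.t (ι+1))*(B-A)))]
          _ ≤ c.E1 * dist (c.g (A + σ*(B-A))) (c.g (A + υ*(B-A))) ^ c.α
              + c.E1 * dist (c.g (A + υ*(B-A))) (c.g (A + σ*(B-A))) ^ c.α := add_le_add side1 side2
          _ = 2 * c.E1 * dist (c.g (A + σ*(B-A))) (c.g (A + υ*(B-A))) ^ c.α := by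
              rw [dist_comm (c.g (A + υ*(B-A)))]; ring
          _ ≤ (2*c.E1 + c.E2) * dist (c.g (A + σ*(B-A))) (c.g (A + υ*(B-A))) ^ c.α := by
              nlinarith [c.E2_nonneg, hrnn]
      · -- κ ≥ ι + 2 : the middle child ι+1 is contained in [σ, υ]
        have hι1m : ι + 1 < c.m := by omega
        have hmono : c.t (ι+1+1) ≤ c.t κ := c.t_mono (by omega) (by omega)
        have h0in : c.T (ι+1) 0 ∈ uIcc σ υ ∧ c.T (ι+1) 1 ∈ uIcc σ υ := by
          have hsubI : Icc (c.t (ι+1)) (c.t (ι+1+1)) ⊆ uIcc σ υ := by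
            rw [uIcc_of_le hσυ]
            exact Icc_subset_Icc hσtι (le_trans hmono htκυ)
          have hlt := c.htlt (ι+1) hι1m
          rcases c.hTend (ι+1) hι1m with ⟨h1, h2⟩ | ⟨h1, h2⟩ <;> rw [h1, h2] <;>
            exact ⟨hsubI ⟨by linarith [le_refl (c.t (ι+1))], by linarith⟩,
              hsubI ⟨by linarith, by linarith⟩⟩
        obtain ⟨hsubu, hP, hQ, hQP, hg, hG⟩ := hGood
        -- lower bound for the g-distance via the middle child and bounded turning
        have hw1 : A + (c.T (ι+1) 0)*(B-A) ∈ uIcc (A + σ*(B-A)) (A + υ*(B-A)) :=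
          seg_mono h0in.1
        have hw2 : A + (c.T (ι+1) 1)*(B-A) ∈ uIcc (A + σ*(B-A)) (A + υ*(B-A)) :=
          seg_mono h0in.2
        have hs01 : A + σ*(B-A) ∈ Icc (0:ℝ) 1 := e_mem_unit hsubu hσ
        have hu01 : A + υ*(B-A) ∈ Icc (0:ℝ) 1 := e_mem_unit hsubu hυ
        have hdist : dist (c.g (A + (c.T (ι+1) 0)*(B-A))) (c.g (A + (c.T (ι+1) 1)*(B-A)))
            = P * (c.p (ι+1) * dist (c.g 0) (c.g 1)) := by
          rw [hg _ (c.T_mem_end hι1m).1 _ (c.T_mem_end hι1m).2,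
            c.hgp (ι+1) hι1m 0 mem01 1 mem11]
        have hBT1 : dist (c.g (A + (c.T (ι+1) 0)*(B-A))) (c.g (A + (c.T (ι+1) 1)*(B-A)))
            ≤ c.M * dist (c.g (A + σ*(B-A))) (c.g (A + υ*(B-A))) :=
          c.hBT _ hs01 _ hu01 _ hw1 _ hw2
        have hPle : P ≤ (c.M / (c.pmin * dist (c.g 0) (c.g 1)))
            * dist (c.g (A + σ*(B-A))) (c.g (A + υ*(B-A))) := by
          apply c.P_from_BT c.hM
          have h1 : c.pmin * P * dist (c.g 0) (c.g 1)
              ≤ P * (c.p (ι+1) * dist (c.g 0) (c.g 1)) := by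
            have h3 : c.pmin * P ≤ c.p (ι+1) * P :=
              mul_le_mul_of_nonneg_right (c.hpminle _ hι1m) hP.le
            calc c.pmin * P * dist (c.g 0) (c.g 1)
                ≤ c.p (ι+1) * P * dist (c.g 0) (c.g 1) :=
                  mul_le_mul_of_nonneg_right h3 dist_nonneg
              _ = P * (c.p (ι+1) * dist (c.g 0) (c.g 1)) := by ring
          calc c.pmin * P * dist (c.g 0) (c.g 1)
              ≤ P * (c.p (ι+1) * dist (c.g 0) (c.g 1)) := h1
            _ = dist (c.g (A + (c.T (ι+1) 0)*(B-A))) (c.g (A + (c.T (ι+1) 1)*(B-A))) :=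
                hdist.symm
            _ ≤ c.M * dist (c.g (A + σ*(B-A))) (c.g (A + υ*(B-A))) := hBT1
        calc dist (c.G (A + σ*(B-A))) (c.G (A + υ*(B-A)))
            = Q * dist (c.G σ) (c.G υ) := hG σ hσ υ hυ
          _ ≤ Q * c.D' := mul_le_mul_of_nonneg_left (c.hD' σ hσ υ hυ) hQ.le
          _ ≤ P ^ c.α * c.D' := mul_le_mul_of_nonneg_right hQP c.hD'0
          _ ≤ c.E2 * dist (c.g (A + σ*(B-A))) (c.g (A + υ*(B-A))) ^ c.α :=
              c.rpow_push hP (div_pos c.hM (mul_pos c.hpmin c.hDpos)) hdnn hPle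
          _ ≤ (2*c.E1 + c.E2) * dist (c.g (A + σ*(B-A))) (c.g (A + υ*(B-A))) ^ c.α := by
              nlinarith [c.E1_nonneg, hrnn]
    intro A B P Q hGood σ υ hσ hυ hk
    rcases le_total σ υ with h | h
    · exact claim A B P Q hGood σ υ hσ hυ h hk
    · have h2 := claim A B P Q hGood υ σ hυ hσ h (by rwa [abs_sub_comm])
      rwa [dist_comm (c.G (A + υ*(B-A))), dist_comm (c.g (A + υ*(B-A)))] at h2

/-- the final Hölder estimate for the pair `(g, G)` -/
lemma final : ∃ C > (0:ℝ), ∀ σ ∈ Icc (0:ℝ) 1, ∀ υ ∈ Icc (0:ℝ) 1,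
    dist (c.G σ) (c.G υ) ≤ C * dist (c.g σ) (c.g υ) ^ c.α := by
  refine ⟨2*c.E1 + c.E2 + 1, by nlinarith [c.E1_nonneg, c.E2_nonneg], ?_⟩
  intro σ hσ υ hυ
  have hrnn : (0:ℝ) ≤ dist (c.g σ) (c.g υ) ^ c.α := Real.rpow_nonneg dist_nonneg _
  by_cases hσυ : σ = υ
  · rw [hσυ, dist_self]
    exact mul_nonneg (by nlinarith [c.E1_nonneg, c.E2_nonneg])
      (Real.rpow_nonneg dist_nonneg _)
  · obtain ⟨k, hk⟩ := exists_pow_lt_of_lt_one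
      (abs_pos.2 (sub_ne_zero.2 hσυ)) c.hrmax1
    have h := c.main_ind k 0 1 1 1 c.good_unit σ υ hσ hυ hk
    rw [show (0:ℝ) + σ*(1-0) = σ by ring, show (0:ℝ) + υ*(1-0) = υ by ring] at h
    calc dist (c.G σ) (c.G υ) ≤ (2*c.E1 + c.E2) * dist (c.g σ) (c.g υ) ^ c.α := h
      _ ≤ (2*c.E1 + c.E2 + 1) * dist (c.g σ) (c.g υ) ^ c.α := by nlinarith [hrnn]

end ZCore

/-- Construct the core data and extract the Hölder estimate. -/
lemma glue {X Y : Type*} [MetricSpace X] [MetricSpace Y]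
    (m : ℕ) (hm : 0 < m) (T : ℕ → ℝ → ℝ) (rT : ℕ → ℝ) (t : ℕ → ℝ) (ε : ℕ → ℕ)
    (hT : IsLinearZipper m T rT t ε)
    (g : ℝ → X) (G : ℝ → Y) (p q : ℕ → ℝ) (α : ℝ) (hα : 0 < α)
    (hp : ∀ i < m, 0 < p i) (hq : ∀ i < m, 0 < q i)
    (hqp : ∀ i < m, q i ≤ p i ^ α)
    (hgp : ∀ i < m, ∀ x ∈ Icc (0:ℝ) 1, ∀ y ∈ Icc (0:ℝ) 1,
      dist (g (T i x)) (g (T i y)) = p i * dist (g x) (g y))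
    (hGq : ∀ i < m, ∀ x ∈ Icc (0:ℝ) 1, ∀ y ∈ Icc (0:ℝ) 1,
      dist (G (T i x)) (G (T i y)) = q i * dist (G x) (G y))
    (M : ℝ) (hM : 0 < M)
    (hBT : ∀ s ∈ Icc (0:ℝ) 1, ∀ u ∈ Icc (0:ℝ) 1, ∀ w1 ∈ uIcc s u, ∀ w2 ∈ uIcc s u,
      dist (g w1) (g w2) ≤ M * dist (g s) (g u))
    (D' : ℝ) (hD' : ∀ x ∈ Icc (0:ℝ) 1, ∀ y ∈ Icc (0:ℝ) 1, dist (G x) (G y) ≤ D')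
    (hD : g 0 ≠ g 1) :
    ∃ C > (0:ℝ), ∀ σ ∈ Icc (0:ℝ) 1, ∀ υ ∈ Icc (0:ℝ) 1,
      dist (G σ) (G υ) ≤ C * dist (g σ) (g υ) ^ α := by
  obtain ⟨⟨hm1, hsim, hε, hzip⟩, ht0, htm, htlt⟩ := hT
  have hne : (Finset.range m).Nonempty := Finset.nonempty_range_iff.mpr hm.ne'
  -- endpoint identification
  have hTend : ∀ i < m, (T i 0 = t i ∧ T i 1 = t (i+1)) ∨ (T i 0 = t (i+1) ∧ T i 1 = t i) := by
    intro i hi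
    obtain ⟨h1, h2⟩ := hzip i hi
    rw [ht0] at h1
    rw [htm] at h2
    have hεi := hε i hi
    interval_cases h : ε i
    · exact Or.inl ⟨by simpa using h1, by simpa using h2⟩
    · exact Or.inr ⟨by simpa using h1, by simpa using h2⟩
  -- the linear maps are affine on [0,1]
  have hTaff : ∀ i < m, ∀ x ∈ Icc (0:ℝ) 1, T i x = T i 0 + x * (T i 1 - T i 0) := by
    intro i hi x hx
    obtain ⟨hr0, hr1, hrd⟩ := hsim i hi
    apply between_formula (r := rT i) hx
    · have h := hrd x 0
      rw [Real.dist_eq, Real.dist_eq, sub_zero, abs_of_nonneg hx.1] at h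
      exact h
    · have h := hrd x 1
      rw [Real.dist_eq, Real.dist_eq, abs_of_nonpos (by linarith [hx.2] : x - 1 ≤ 0)] at h
      rw [h]; ring_nf
    · have h := hrd 1 0
      rw [Real.dist_eq, Real.dist_eq, sub_zero] at h
      norm_num at h
      exact h
  -- the gaps equal the ratios
  have hgapeq : ∀ i < m, t (i+1) - t i = rT i := by
    intro i hi
    obtain ⟨hr0, hr1, hrd⟩ := hsim i hi
    have h := hrd 1 0
    rw [Real.dist_eq, Real.dist_eq, sub_zero] at h
    norm_num at h
    have hlt := htlt i hi
    rcases hTend i hi with ⟨h1, h2⟩ | ⟨h1, h2⟩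
    · rw [h1, h2] at h
      rw [← h, abs_of_nonneg (by linarith)]
    · rw [h1, h2] at h
      rw [abs_sub_comm] at h
      rw [← h, abs_of_nonneg (by linarith)]
  -- the maximal gap and minimal ratio
  set rmax := (Finset.range m).sup' hne rT with hrmaxdef
  set pmin := (Finset.range m).inf' hne p with hpmindef
  have hrmax0 : 0 < rmax := lt_of_lt_of_le (hsim 0 hm).1
    (Finset.le_sup' rT (Finset.mem_range.2 hm))
  have hrmax1 : rmax < 1 := by
    rw [hrmaxdef, Finset.sup'_lt_iff]
    intro i hi
    exact (hsim i (Finset.mem_range.1 hi)).2.1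
  have hpmin : 0 < pmin := by
    rw [hpmindef, Finset.lt_inf'_iff]
    intro i hi
    exact hp i (Finset.mem_range.1 hi)
  have hpminle : ∀ i < m, pmin ≤ p i := fun i hi =>
    Finset.inf'_le p (Finset.mem_range.2 hi)
  have hgap : ∀ i < m, t (i+1) - t i ≤ rmax := by
    intro i hi
    rw [hgapeq i hi]
    exact Finset.le_sup' rT (Finset.mem_range.2 hi)
  let c : ZCore X Y :=
    { m := m, hm := hm, T := T, t := t, g := g, G := G, p := p, q := q, α := α,
      M := M, D' := D', pmin := pmin, rmax := rmax,
      hα := hα, ht0 := ht0, htm := htm, htlt := htlt,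
      hTaff := hTaff, hTend := hTend,
      hp := hp, hq := hq, hqp := hqp, hgp := hgp, hGq := hGq,
      hM := hM, hBT := hBT, hD' := hD', hD := hD,
      hpmin := hpmin, hpminle := hpminle,
      hrmax0 := hrmax0, hrmax1 := hrmax1, hgap := hgap }
  exact c.final

theorem zippers_biHolder {n : ℕ} (m : ℕ)
    (S S' : ℕ → EuclideanSpace ℝ (Fin n) → EuclideanSpace ℝ (Fin n)) (p q : ℕ → ℝ)
    (z z' : ℕ → EuclideanSpace ℝ (Fin n)) (ε : ℕ → ℕ)
    (γ γ' : Set (EuclideanSpace ℝ (Fin n)))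
    (hS : IsJordanZipper m S p z ε γ) (hS' : IsJordanZipper m S' q z' ε γ')
    (M M' : ℝ) (hγ : BoundedTurning γ M) (hγ' : BoundedTurning γ' M')
    (f : EuclideanSpace ℝ (Fin n) → EuclideanSpace ℝ (Fin n))
    (hf : IsHomeoOnto γ γ' f) (hfa : Agrees m S S' γ f)
    (hm : 0 < m) (α : ℝ)
    (hα : α = (Finset.range m).inf' (Finset.nonempty_range_iff.mpr hm.ne')
      (fun i => min (Real.log (p i) / Real.log (q i)) (Real.log (q i) / Real.log (p i)))) :
    (∃ C > (0:ℝ), ∀ x ∈ γ, ∀ y ∈ γ, dist (f x) (f y) ≤ C * dist x y ^ α) ∧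
    (∃ C > (0:ℝ), ∀ x ∈ γ, ∀ y ∈ γ, dist x y ≤ C * dist (f x) (f y) ^ α) := by
  obtain ⟨hzip, hattr, T, rT, t, g, hlin, hstruct, hinj, himg⟩ := hS
  have hsimS : IsSimilaritySystem m S p := hzip.2.1
  have hsimS' : IsSimilaritySystem m S' q := hS'.1.2.1
  have hattr' : IsAttractor m S' γ' := hS'.2.1
  have hp' : ∀ i < m, 0 < p i := fun i hi => (hsimS i hi).1
  have hq' : ∀ i < m, 0 < q i := fun i hi => (hsimS' i hi).1
  have hlogp : ∀ i < m, Real.log (p i) < 0 :=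
    fun i hi => Real.log_neg (hsimS i hi).1 (hsimS i hi).2.1
  have hlogq : ∀ i < m, Real.log (q i) < 0 :=
    fun i hi => Real.log_neg (hsimS' i hi).1 (hsimS' i hi).2.1
  -- positivity of the exponent
  have hαpos : 0 < α := by
    rw [hα, Finset.lt_inf'_iff]
    intro i hi
    have hi' := Finset.mem_range.1 hi
    exact lt_min (div_pos_iff.mpr (Or.inr ⟨hlogp i hi', hlogq i hi'⟩))
      (div_pos_iff.mpr (Or.inr ⟨hlogq i hi', hlogp i hi'⟩))
  -- the two exponent inequalities
  have key : ∀ i < m, ∀ a b : ℝ, 0 < a → a < 1 → 0 < b →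
      α ≤ Real.log b / Real.log a → b ≤ a ^ α := by
    intro i _ a b ha ha1 hb h1
    have hla : Real.log a < 0 := Real.log_neg ha ha1
    have h3 : Real.log a ≠ 0 := ne_of_lt hla
    have h4 : (Real.log b / Real.log a) * Real.log a ≤ α * Real.log a :=
      mul_le_mul_of_nonpos_right h1 hla.le
    rw [div_mul_cancel₀ _ h3] at h4
    calc b = Real.exp (Real.log b) := (Real.exp_log hb).symm
      _ ≤ Real.exp (Real.log a * α) := Real.exp_le_exp.2 (by linarith)
      _ = a ^ α := (Real.rpow_def_of_pos ha α).symm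
  have hqp : ∀ i < m, q i ≤ p i ^ α := by
    intro i hi
    refine key i hi _ _ (hp' i hi) (hsimS i hi).2.1 (hq' i hi) ?_
    rw [hα]
    exact le_trans (Finset.inf'_le _ (Finset.mem_range.2 hi)) (min_le_right _ _)
  have hpq : ∀ i < m, p i ≤ q i ^ α := by
    intro i hi
    refine key i hi _ _ (hq' i hi) (hsimS' i hi).2.1 (hp' i hi) ?_
    rw [hα]
    exact le_trans (Finset.inf'_le _ (Finset.mem_range.2 hi)) (min_le_left _ _)
  -- structural parametrization facts
  obtain ⟨hgC, hgz, hgS⟩ := hstruct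
  have memγ : ∀ x ∈ Icc (0:ℝ) 1, g x ∈ γ := fun x hx => himg ▸ mem_image_of_mem g hx
  have hgp : ∀ i < m, ∀ x ∈ Icc (0:ℝ) 1, ∀ y ∈ Icc (0:ℝ) 1,
      dist (g (T i x)) (g (T i y)) = p i * dist (g x) (g y) := by
    intro i hi x hx y hy
    rw [← hgS i hi x hx, ← hgS i hi y hy, (hsimS i hi).2.2]
  have hGq : ∀ i < m, ∀ x ∈ Icc (0:ℝ) 1, ∀ y ∈ Icc (0:ℝ) 1,
      dist (f (g (T i x))) (f (g (T i y))) = q i * dist (f (g x)) (f (g y)) := by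
    intro i hi x hx y hy
    rw [← hgS i hi x hx, ← hgS i hi y hy, hfa i hi (g x) (memγ x hx),
      hfa i hi (g y) (memγ y hy), (hsimS' i hi).2.2]
  -- bounded turning in parametrized form, for g
  have harc : IsArcParam γ g := ⟨hgC, hinj, himg⟩
  have hbdd : Bornology.IsBounded γ := hattr.2.1.isBounded
  have hbdd' : Bornology.IsBounded γ' := hattr'.2.1.isBounded
  have hIccuIcc : Icc (0:ℝ) 1 = uIcc (0:ℝ) 1 := (uIcc_of_le zero_le_one).symm
  have hsubim : ∀ s ∈ Icc (0:ℝ) 1, ∀ u ∈ Icc (0:ℝ) 1, uIcc s u ⊆ Icc (0:ℝ) 1 := by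
    intro s hs u hu
    rw [hIccuIcc]
    exact uIcc_subset_uIcc (by rwa [← hIccuIcc]) (by rwa [← hIccuIcc])
  have hBTg : ∀ s ∈ Icc (0:ℝ) 1, ∀ u ∈ Icc (0:ℝ) 1, ∀ w1 ∈ uIcc s u, ∀ w2 ∈ uIcc s u,
      dist (g w1) (g w2) ≤ M * dist (g s) (g u) := by
    intro s hs u hu w1 h1 w2 h2
    have hsub2 : g '' uIcc s u ⊆ γ := by
      rw [← himg]
      exact image_mono (hsubim s hs u hu)
    calc dist (g w1) (g w2) ≤ diam (g '' uIcc s u) :=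
          dist_le_diam_of_mem (hbdd.subset hsub2)
            (mem_image_of_mem _ h1) (mem_image_of_mem _ h2)
      _ ≤ M * dist (g s) (g u) := hγ.2 g harc s hs u hu
  -- the composed parametrization of γ'
  have harc' : IsArcParam γ' (fun x => f (g x)) := by
    refine ⟨ContinuousOn.comp hf.1 hgC memγ, ?_, ?_⟩
    · intro a ha b hb h
      exact hinj ha hb (hf.2.1 (memγ a ha) (memγ b hb) h)
    · rw [show (fun x => f (g x)) '' Icc (0:ℝ) 1 = f '' (g '' Icc (0:ℝ) 1) from
        (image_image f g _).symm ▸ rfl, himg, hf.2.2]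
  have hBTfg : ∀ s ∈ Icc (0:ℝ) 1, ∀ u ∈ Icc (0:ℝ) 1, ∀ w1 ∈ uIcc s u, ∀ w2 ∈ uIcc s u,
      dist (f (g w1)) (f (g w2)) ≤ M' * dist (f (g s)) (f (g u)) := by
    intro s hs u hu w1 h1 w2 h2
    have hsub2 : (fun x => f (g x)) '' uIcc s u ⊆ γ' := by
      rw [← harc'.2.2]
      exact image_mono (hsubim s hs u hu)
    calc dist (f (g w1)) (f (g w2)) ≤ diam ((fun x => f (g x)) '' uIcc s u) :=
          dist_le_diam_of_mem (hbdd'.subset hsub2)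
            (mem_image_of_mem (fun x => f (g x)) h1) (mem_image_of_mem (fun x => f (g x)) h2)
      _ ≤ M' * dist (f (g s)) (f (g u)) := hγ'.2 _ harc' s hs u hu
  -- diameter bounds
  have hD'γ' : ∀ x ∈ Icc (0:ℝ) 1, ∀ y ∈ Icc (0:ℝ) 1,
      dist (f (g x)) (f (g y)) ≤ diam γ' := by
    intro x hx y hy
    have h1 : f (g x) ∈ γ' := hf.2.2 ▸ mem_image_of_mem f (memγ x hx)
    have h2 : f (g y) ∈ γ' := hf.2.2 ▸ mem_image_of_mem f (memγ y hy)
    exact dist_le_diam_of_mem hbdd' h1 h2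
  have hD'γ : ∀ x ∈ Icc (0:ℝ) 1, ∀ y ∈ Icc (0:ℝ) 1, dist (g x) (g y) ≤ diam γ := by
    intro x hx y hy
    exact dist_le_diam_of_mem hbdd (memγ x hx) (memγ y hy)
  -- nondegeneracy
  have h01 : (0:ℝ) ∈ Icc (0:ℝ) 1 := ⟨le_rfl, zero_le_one⟩
  have h11 : (1:ℝ) ∈ Icc (0:ℝ) 1 := ⟨zero_le_one, le_rfl⟩
  have hg01 : g 0 ≠ g 1 := by
    intro h
    have := hinj h01 h11 h
    norm_num at this
  have hfg01 : f (g 0) ≠ f (g 1) := by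
    intro h
    exact hg01 (hf.2.1 (memγ 0 h01) (memγ 1 h11) h)
  -- the two Hölder estimates
  obtain ⟨C₁, hC₁, hH₁⟩ := glue m hm T rT t ε hlin g (fun x => f (g x)) p q α hαpos
    hp' hq' hqp hgp hGq M hγ.1 hBTg (diam γ') hD'γ' hg01
  obtain ⟨C₂, hC₂, hH₂⟩ := glue m hm T rT t ε hlin (fun x => f (g x)) g q p α hαpos
    hq' hp' hpq hGq hgp M' hγ'.1 hBTfg (diam γ) hD'γ hfg01
  constructor
  · refine ⟨C₁, hC₁, ?_⟩
    intro x hx y hy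
    rw [← himg] at hx hy
    obtain ⟨σ, hσ, rfl⟩ := hx
    obtain ⟨υ, hυ, rfl⟩ := hy
    exact hH₁ σ hσ υ hυ
  · refine ⟨C₂, hC₂, ?_⟩
    intro x hx y hy
    rw [← himg] at hx hy
    obtain ⟨σ, hσ, rfl⟩ := hx
    obtain ⟨υ, hυ, rfl⟩ := hy
    exact hH₂ σ hσ υ hυ
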